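/- Suppose P is a 231-avoiding full rook placement on a Ferrers board F, and V1, V2 are vertices of F such that V1 is directly below V2. Suppose P has a marker X in the top row of R(V2) and another marker Y in R(V2) that is to the right of X. Then S(P,V1) = S(P,V2). -/

import Mathlib

/-!
Common definitions: Ferrers boards, rook placements, pattern avoidance,
following Bloom–Saracino, "A Simple Bijection Between 231-Avoiding and
312-Avoiding Placements".

A square of the `n × n` array `𝒜` is recorded by the pair
`(column index, row index)` (0-based), i.e. the square `(c, r)` is the unit
square with SW corner `(c, r)` and NE corner `(c+1, r+1)`.
-/

/-- A square of the grid, given by its (column index, row index), both 0-based. -/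
abbrev Square : Type := ℕ × ℕ

/-- For a vertex `V = (a, b)`, `RV V` is the set of squares of the rectangle `R(V)`
bounded by the lines `x = 0`, `x = a`, `y = 0`, `y = b`: all squares with column
index `< a` and row index `< b`. -/
def RV (V : ℕ × ℕ) : Finset Square := Finset.range V.1 ×ˢ Finset.range V.2

/-- A Ferrers board contained in the `n × n` array `𝒜`: a set of squares such that
`R(V) ⊆ F` for every vertex `V` of `F`, i.e. a downward- and leftward-closed set
of squares. -/
structure FerrersBoard (n : ℕ) where
  squares : Finset Square
  inArray : ∀ s ∈ squares, s.1 < n ∧ s.2 < n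
  closed : ∀ s ∈ squares, ∀ t : Square, t.1 ≤ s.1 → t.2 ≤ s.2 → t ∈ squares

namespace FerrersBoard

variable {n : ℕ}

/-- The number of squares in column `c` of `F`. -/
def colHeight (F : FerrersBoard n) (c : ℕ) : ℕ :=
  (F.squares.filter fun s => s.1 = c).card

/-- The number of squares in row `r` of `F`. -/
def rowWidth (F : FerrersBoard n) (r : ℕ) : ℕ :=
  (F.squares.filter fun s => s.2 = r).card

/-- The length of the longest row of `F` (the bottom row, by closedness),
i.e. the number of nonempty columns of `F`. -/
def width (F : FerrersBoard n) : ℕ := F.rowWidth 0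

/-- The length of the longest column of `F` (the leftmost column, by closedness),
i.e. the number of nonempty rows of `F`. -/
def height (F : FerrersBoard n) : ℕ := F.colHeight 0

/-- `V` is a vertex of `F`, i.e. a corner of one of the squares of `F`. -/
def IsVertex (F : FerrersBoard n) (V : ℕ × ℕ) : Prop :=
  ∃ s ∈ F.squares, (V.1 = s.1 ∨ V.1 = s.1 + 1) ∧ (V.2 = s.2 ∨ V.2 = s.2 + 1)

/-- `V = (a, b)` lies on the right/up border of `F` (the border of `F` excluding
its vertical left-hand side and horizontal bottom): this border is the staircase
lattice path from the top-left corner `(0, height F)` down to `(width F, 0)`, and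
its vertices are exactly those `(a, b)` with `a ≤ width F` and
`colHeight a ≤ b ≤ colHeight (a - 1)` (where for `a = 0` truncated subtraction
makes the condition read `b = height F`). -/
def IsBorderVertex (F : FerrersBoard n) (V : ℕ × ℕ) : Prop :=
  V.1 ≤ F.width ∧ F.colHeight V.1 ≤ V.2 ∧ V.2 ≤ F.colHeight (V.1 - 1)

/-- `V1, V2` are `F`-diagonal vertices: both lie on the right/up border of `F`
and they are the left and right ends of a diagonal of slope `-1` lying entirely
within `F` (the diagonal from `V1 = (a, b)` to `V2 = (a + k, b - k)` passes, for
each `0 ≤ i < k`, through the square with column `a + i` and row `b - i - 1`,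
and all these squares must belong to `F`). -/
def DiagonalVertices (F : FerrersBoard n) (V1 V2 : ℕ × ℕ) : Prop :=
  F.IsBorderVertex V1 ∧ F.IsBorderVertex V2 ∧
    ∃ k : ℕ, V2.1 = V1.1 + k ∧ V1.2 = V2.2 + k ∧
      ∀ i < k, (V1.1 + i, V2.2 + (k - 1 - i)) ∈ F.squares

end FerrersBoard

/-- `V1` is directly to the left of `V2`. -/
def LeftOf (V1 V2 : ℕ × ℕ) : Prop := V2.1 = V1.1 + 1 ∧ V2.2 = V1.2

/-- `V1` is directly below `V2`. -/
def Below (V1 V2 : ℕ × ℕ) : Prop := V2.1 = V1.1 ∧ V2.2 = V1.2 + 1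

/-- `P` is a rook placement on the Ferrers board `F`: a subset of `F` containing
at most one square (marker) from each column and at most one from each row. -/
def IsRookPlacement {n : ℕ} (F : FerrersBoard n) (P : Finset Square) : Prop :=
  P ⊆ F.squares ∧ (∀ x ∈ P, ∀ y ∈ P, x.1 = y.1 → x = y) ∧
    (∀ x ∈ P, ∀ y ∈ P, x.2 = y.2 → x = y)

/-- `P` is a full rook placement on `F`: a rook placement with exactly one marker
in each (nonempty) column and each (nonempty) row of `F`. -/
def IsFullPlacement {n : ℕ} (F : FerrersBoard n) (P : Finset Square) : Prop :=
  IsRookPlacement F P ∧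
    ∀ s ∈ F.squares, (∃ r, (s.1, r) ∈ P) ∧ (∃ c, (c, s.2) ∈ P)

/-- The set of markers `M` contains an occurrence of the pattern `τ ∈ S₃`:
three markers, listed with strictly increasing columns, whose rows are ordered
as the values of `τ`. -/
def ContainsPattern (M : Finset Square) (τ : Equiv.Perm (Fin 3)) : Prop :=
  ∃ m : Fin 3 → Square, (∀ i, m i ∈ M) ∧
    (∀ i j : Fin 3, i < j → (m i).1 < (m j).1) ∧
    (∀ i j : Fin 3, (m i).2 < (m j).2 ↔ τ i < τ j)

/-- The rook placement `P` on `F` avoids `τ`: for every vertex `V` on the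
right/up border of `F`, the restriction of `P` to `R(V)` (equivalently, the
permutation order-isomorphic to it) avoids `τ`. -/
def AvoidsOn {n : ℕ} (F : FerrersBoard n) (P : Finset Square)
    (τ : Equiv.Perm (Fin 3)) : Prop :=
  ∀ V : ℕ × ℕ, F.IsBorderVertex V → ¬ ContainsPattern (P ∩ RV V) τ

/-- The pattern 231 (in one-line notation), as a permutation of `Fin 3`. -/
def perm231 : Equiv.Perm (Fin 3) := ⟨![1, 2, 0], ![2, 0, 1], by decide, by decide⟩

/-- The pattern 312 (in one-line notation), as a permutation of `Fin 3`. -/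
def perm312 : Equiv.Perm (Fin 3) := ⟨![2, 0, 1], ![1, 2, 0], by decide, by decide⟩

/-- The maximal length of an increasing sequence of markers of `M`. -/
noncomputable def maxIncSeq (M : Finset Square) : ℕ :=
  sSup {k : ℕ | ∃ f : Fin k → Square, (∀ i, f i ∈ M) ∧
    ∀ i j : Fin k, i < j → (f i).1 < (f j).1 ∧ (f i).2 < (f j).2}

/-- `S(P, V)`: the maximal length of an increasing sequence of markers of `P`
inside the rectangle `R(V)`.  The function `fun V => SPV P V`, restricted to the
vertices of the right/up border of `F`, is the sequence `S(P, F)`. -/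
noncomputable def SPV (P : Finset Square) (V : ℕ × ℕ) : ℕ := maxIncSeq (P ∩ RV V)

/-- The `S ↦ S⁺` operation on `F`-sequences, relative to the function
`N = N(F, ·)` counting markers in rectangles: `S⁺(V) = 0` if `S V = 0`, and
`S⁺(V) = N V + 1 - S V` otherwise. -/
def plusSeq (N S : ℕ × ℕ → ℕ) : ℕ × ℕ → ℕ :=
  fun V => if S V = 0 then 0 else N V + 1 - S V

/-- The 231-conditions for the pair `(F, S)`: monotonicity, the 0-conditions and
the (231-)diagonal condition. -/
def Conditions231 {n : ℕ} (F : FerrersBoard n) (S : ℕ × ℕ → ℕ) : Prop :=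
  -- (i) monotonicity conditions
  (∀ V1 V2 : ℕ × ℕ, F.IsBorderVertex V1 → F.IsBorderVertex V2 →
    (LeftOf V1 V2 ∨ Below V1 V2) → S V1 ≤ S V2 ∧ S V2 ≤ S V1 + 1) ∧
  -- (ii) 0-conditions: first and last values are 0, no two consecutive 0s
  S (0, F.height) = 0 ∧ S (F.width, 0) = 0 ∧
  (∀ V1 V2 : ℕ × ℕ, F.IsBorderVertex V1 → F.IsBorderVertex V2 →
    (LeftOf V1 V2 ∨ Below V1 V2) → ¬(S V1 = 0 ∧ S V2 = 0)) ∧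
  -- (iii) diagonal condition
  (∀ V1 V2 : ℕ × ℕ, F.DiagonalVertices V1 V2 → S V1 ≤ S V2)

/-- The 312-conditions for the pair `(F, S)`: the same as the 231-conditions,
with the inequality in the diagonal condition reversed. -/
def Conditions312 {n : ℕ} (F : FerrersBoard n) (S : ℕ × ℕ → ℕ) : Prop :=
  (∀ V1 V2 : ℕ × ℕ, F.IsBorderVertex V1 → F.IsBorderVertex V2 →
    (LeftOf V1 V2 ∨ Below V1 V2) → S V1 ≤ S V2 ∧ S V2 ≤ S V1 + 1) ∧
  S (0, F.height) = 0 ∧ S (F.width, 0) = 0 ∧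
  (∀ V1 V2 : ℕ × ℕ, F.IsBorderVertex V1 → F.IsBorderVertex V2 →
    (LeftOf V1 V2 ∨ Below V1 V2) → ¬(S V1 = 0 ∧ S V2 = 0)) ∧
  (∀ V1 V2 : ℕ × ℕ, F.DiagonalVertices V1 V2 → S V2 ≤ S V1)

section Aux

/-- The set whose supremum is `maxIncSeq`. -/
def incSeqSet (M : Finset Square) : Set ℕ :=
  {k : ℕ | ∃ f : Fin k → Square, (∀ i, f i ∈ M) ∧
    ∀ i j : Fin k, i < j → (f i).1 < (f j).1 ∧ (f i).2 < (f j).2}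

lemma maxIncSeq_eq (M : Finset Square) : maxIncSeq M = sSup (incSeqSet M) := rfl

lemma incSeqSet_bddAbove (M : Finset Square) : ∀ k ∈ incSeqSet M, k ≤ M.card := by
  rintro k ⟨f, hfM, hfinc⟩
  have : (Finset.univ : Finset (Fin k)).card ≤ M.card := by
    apply Finset.card_le_card_of_injOn f (fun i _ => hfM i)
    intro i _ j _ hij
    rcases lt_trichotomy i j with h | h | h
    · exact absurd (congrArg Prod.fst hij) (Nat.ne_of_lt (hfinc i j h).1)
    · exact h
    · exact absurd (congrArg Prod.fst hij) (Nat.ne_of_gt (hfinc j i h).1)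
  simpa using this

lemma incSeqSet_zero (M : Finset Square) : 0 ∈ incSeqSet M :=
  ⟨Fin.elim0, fun i => i.elim0, fun i => i.elim0⟩

lemma maxIncSeq_mem (M : Finset Square) : maxIncSeq M ∈ incSeqSet M := by
  rw [maxIncSeq_eq]
  exact Nat.sSup_mem ⟨0, incSeqSet_zero M⟩ ⟨M.card, incSeqSet_bddAbove M⟩

lemma le_maxIncSeq (M : Finset Square) {k : ℕ} (hk : k ∈ incSeqSet M) :
    k ≤ maxIncSeq M :=
  le_csSup ⟨M.card, incSeqSet_bddAbove M⟩ hk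

lemma maxIncSeq_mono {M N : Finset Square} (h : M ⊆ N) :
    maxIncSeq M ≤ maxIncSeq N := by
  apply le_maxIncSeq
  obtain ⟨f, hfM, hfinc⟩ := maxIncSeq_mem M
  exact ⟨f, fun i => h (hfM i), hfinc⟩

variable {n : ℕ}

lemma FerrersBoard.lt_colHeight {F : FerrersBoard n} {c r : ℕ}
    (h : (c, r) ∈ F.squares) : r < F.colHeight c := by
  have hsub : ({c} : Finset ℕ) ×ˢ Finset.range (r + 1) ⊆
      F.squares.filter fun s => s.1 = c := by
    intro s hs
    simp only [Finset.mem_product, Finset.mem_singleton, Finset.mem_range] at hs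
    simp only [Finset.mem_filter]
    exact ⟨F.closed _ h s (le_of_eq hs.1) (Nat.lt_succ_iff.mp hs.2), hs.1⟩
  have := Finset.card_le_card hsub
  simp only [Finset.card_product, Finset.card_singleton, Finset.card_range,
    one_mul] at this
  exact Nat.lt_of_succ_le (this.trans_eq rfl)

lemma FerrersBoard.mem_of_lt_colHeight {F : FerrersBoard n} {c r : ℕ}
    (h : r < F.colHeight c) : (c, r) ∈ F.squares := by
  by_contra hmem
  have hsub : (F.squares.filter fun s => s.1 = c) ⊆
      ({c} : Finset ℕ) ×ˢ Finset.range r := by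
    intro s hs
    simp only [Finset.mem_filter] at hs
    simp only [Finset.mem_product, Finset.mem_singleton, Finset.mem_range]
    refine ⟨hs.2, ?_⟩
    by_contra hr
    exact hmem (F.closed s hs.1 (c, r) (le_of_eq hs.2.symm) (le_of_not_gt hr))
  have := Finset.card_le_card hsub
  simp only [Finset.card_product, Finset.card_singleton, Finset.card_range,
    one_mul] at this
  exact absurd h (not_lt.mpr this)

lemma FerrersBoard.lt_width {F : FerrersBoard n} {c r : ℕ}
    (h : (c, r) ∈ F.squares) : c < F.width := by
  have h0 : ((c, 0) : Square) ∈ F.squares := F.closed _ h _ le_rfl (Nat.zero_le _)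
  have hsub : Finset.range (c + 1) ×ˢ ({0} : Finset ℕ) ⊆
      F.squares.filter fun s => s.2 = 0 := by
    intro s hs
    simp only [Finset.mem_product, Finset.mem_singleton, Finset.mem_range] at hs
    simp only [Finset.mem_filter]
    exact ⟨F.closed _ h0 s (Nat.lt_succ_iff.mp hs.1) (le_of_eq hs.2), hs.2⟩
  have := Finset.card_le_card hsub
  simp only [Finset.card_product, Finset.card_singleton, Finset.card_range,
    mul_one] at this
  exact Nat.lt_of_succ_le this

/-- No 231 pattern among markers of `P`, provided the bounding square is in `F`. -/
lemma no231 {F : FerrersBoard n} {P : Finset Square}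
    (hav : AvoidsOn F P perm231) {Z X Y : Square}
    (hZ : Z ∈ P) (hX : X ∈ P) (hY : Y ∈ P)
    (hZX : Z.1 < X.1) (hXY : X.1 < Y.1) (hYZ : Y.2 < Z.2) (hZX2 : Z.2 < X.2)
    (hsq : (Y.1, X.2) ∈ F.squares) : False := by
  set V' : ℕ × ℕ := (Y.1 + 1, F.colHeight Y.1) with hV'
  have hXh : X.2 < F.colHeight Y.1 := FerrersBoard.lt_colHeight hsq
  have hborder : F.IsBorderVertex V' := by
    refine ⟨FerrersBoard.lt_width hsq, ?_, ?_⟩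
    · show F.colHeight (Y.1 + 1) ≤ F.colHeight Y.1
      rcases Nat.eq_zero_or_pos (F.colHeight (Y.1 + 1)) with h | h
      · omega
      · have : (Y.1 + 1, F.colHeight (Y.1 + 1) - 1) ∈ F.squares :=
          FerrersBoard.mem_of_lt_colHeight (by omega)
        have : (Y.1, F.colHeight (Y.1 + 1) - 1) ∈ F.squares :=
          F.closed _ this _ (by omega) le_rfl
        have := FerrersBoard.lt_colHeight this
        omega
    · simp [hV']
  apply hav V' hborder
  refine ⟨![Z, X, Y], ?_, ?_, ?_⟩
  · intro i
    have hmem : ∀ W : Square, W ∈ P → W.1 < Y.1 + 1 → W.2 < F.colHeight Y.1 →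
        W ∈ P ∩ RV V' := by
      intro W hWP hW1 hW2
      simp only [Finset.mem_inter, RV, Finset.mem_product, Finset.mem_range]
      exact ⟨hWP, hW1, hW2⟩
    fin_cases i
    · exact hmem Z hZ (by omega) (by omega)
    · exact hmem X hX (by omega) (by omega)
    · exact hmem Y hY (by omega) (by omega)
  · intro i j hij
    fin_cases i <;> fin_cases j <;>
      simp_all [Matrix.cons_val_zero, Matrix.cons_val_one] <;> omega
  · intro i j
    fin_cases i <;> fin_cases j <;>
      simp [perm231, Matrix.cons_val_zero, Matrix.cons_val_one,
        Equiv.coe_fn_mk] <;> omega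

end Aux

/-- Lemma 5.  Suppose `P` is a 231-avoiding full rook
placement on a Ferrers board `F` and `V1`, `V2` are vertices of `F` with `V1`
directly below `V2`.  Suppose `P` has a marker `X` in the top row of `R(V2)` and
another marker `Y` in `R(V2)` to the right of `X`.  Then `S(P,V1) = S(P,V2)`. -/
theorem SPV_eq_of_marker_in_top_row {n : ℕ} (F : FerrersBoard n)
    (P : Finset Square) (hP : IsFullPlacement F P) (hPavoid : AvoidsOn F P perm231)
    (V1 V2 : ℕ × ℕ) (h1 : F.IsVertex V1) (h2 : F.IsVertex V2)
    (hbelow : Below V1 V2)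
    (X Y : Square) (hX : X ∈ P ∩ RV V2) (hXtop : X.2 + 1 = V2.2)
    (hY : Y ∈ P ∩ RV V2) (hXY : X.1 < Y.1) :
    SPV P V1 = SPV P V2 := by
  obtain ⟨hb1, hb2⟩ := hbelow
  simp only [Finset.mem_inter, RV, Finset.mem_product, Finset.mem_range] at hX hY
  obtain ⟨hXP, hX1, hX2⟩ := hX
  obtain ⟨hYP, hY1, hY2⟩ := hY
  have hrow : ∀ x ∈ P, ∀ y ∈ P, x.2 = y.2 → x = y := hP.1.2.2
  -- X.2 = V1.2
  have hX2' : X.2 = V1.2 := by omega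
  -- Y.2 < V1.2
  have hYlt : Y.2 < V1.2 := by
    rcases Nat.lt_or_ge Y.2 V1.2 with h | h
    · exact h
    · have : Y.2 = X.2 := by omega
      have hYX := hrow Y hYP X hXP this
      rw [hYX] at hXY
      omega
  -- the bounding square (c, X.2) for any c < V2.1 is in F
  have hsq : ∀ c < V2.1, ((c, X.2) : Square) ∈ F.squares := by
    intro c hc
    obtain ⟨s, hs, hs1, hs2⟩ := h2
    refine F.closed s hs (c, X.2) ?_ ?_ <;> omega
  apply le_antisymm
  · apply maxIncSeq_mono
    apply Finset.inter_subset_inter (Finset.Subset.refl _)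
    intro s hs
    simp only [RV, Finset.mem_product, Finset.mem_range] at hs ⊢
    omega
  · show maxIncSeq (P ∩ RV V2) ≤ maxIncSeq (P ∩ RV V1)
    obtain ⟨f, hfM, hfinc⟩ := maxIncSeq_mem (P ∩ RV V2)
    have hfM' : ∀ i, f i ∈ P ∧ (f i).1 < V2.1 ∧ (f i).2 < V2.2 := by
      intro i
      have := hfM i
      simp only [Finset.mem_inter, RV, Finset.mem_product, Finset.mem_range] at this
      exact ⟨this.1, this.2.1, this.2.2⟩
    by_cases hex : ∃ i0, f i0 = X
    · obtain ⟨i0, hi0⟩ := hex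
      -- i0 is the last index
      have hlast : ∀ j, j ≠ i0 → j < i0 := by
        intro j hj
        rcases lt_or_gt_of_ne hj with h | h
        · exact h
        · have := (hfinc i0 j h).2
          have h2' := (hfM' j).2.2
          rw [hi0] at this
          omega
      refine le_maxIncSeq _ ⟨fun j => if j = i0 then Y else f j, ?_, ?_⟩
      · intro i
        by_cases hii : i = i0
        · dsimp only; rw [if_pos hii]
          simp only [hii, eq_self_iff_true, if_true, Finset.mem_inter, RV,
            Finset.mem_product, Finset.mem_range]
          exact ⟨hYP, by omega, hYlt⟩
        · dsimp only; rw [if_neg hii]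
          simp only [if_neg hii, Finset.mem_inter, RV, Finset.mem_product,
            Finset.mem_range]
          have hne : f i ≠ X := by
            intro h
            have hlt := hlast i hii
            have h2'' := (hfinc i i0 hlt).2
            rw [hi0, h] at h2''
            omega
          have hfi2 : (f i).2 ≠ V1.2 := by
            intro h
            exact hne (hrow (f i) (hfM' i).1 X hXP (by omega))
          exact ⟨(hfM' i).1, by have := (hfM' i).2.1; omega,
            by have := (hfM' i).2.2; omega⟩
      · intro i j hij
        have hine : i ≠ i0 := by
          intro h
          have := hlast j (by intro h'; rw [h, h'] at hij; exact lt_irrefl _ hij)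
          omega
        simp only [if_neg hine]
        by_cases hje : j = i0
        · simp only [hje, eq_self_iff_true, if_true]
          have hicol : (f i).1 < X.1 := by
            have := (hfinc i i0 (hje ▸ hij)).1
            rw [hi0] at this; exact this
          have hirow : (f i).2 < X.2 := by
            have := (hfinc i i0 (hje ▸ hij)).2
            rw [hi0] at this; exact this
          refine ⟨by omega, ?_⟩
          by_contra hle
          have hYfi : Y.2 < (f i).2 := by
            rcases Nat.lt_or_ge Y.2 (f i).2 with h | h
            · exact h
            · have : Y.2 = (f i).2 := by omega
              have := hrow Y hYP (f i) (hfM' i).1 this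
              rw [← this] at hicol
              omega
          exact no231 hPavoid (hfM' i).1 hXP hYP hicol hXY hYfi hirow
            (hsq Y.1 hY1)
        · simp only [if_neg hje]
          exact hfinc i j hij
    · push_neg at hex
      refine le_maxIncSeq _ ⟨f, ?_, hfinc⟩
      intro i
      simp only [Finset.mem_inter, RV, Finset.mem_product, Finset.mem_range]
      have hfi2 : (f i).2 ≠ V1.2 := by
        intro h
        exact hex i (hrow (f i) (hfM' i).1 X hXP (by omega))
      exact ⟨(hfM' i).1, by have := (hfM' i).2.1; omega,
        by have := (hfM' i).2.2; omega⟩
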